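/- Let ν be a finite signed measure on ℝ², let B = D(x,ρ) be a disk, and let Ω ⊂ B be a set whose distance to supp ν is at least ερ, where 0 < ε < 1. Then for any M ≥ 6 and s ∈ (1,2), the oscillation of the Riesz transform Rν over Ω satisfies osc_Ω Rν ≤ (2/(ερ)^s)·|ν|((M/3)B) + (C/M)·sup_{r>0} |ν|(D(x,r))/r^s, where C depends only on s. -/

import Mathlib

open MeasureTheory

section Aux
open Real

section Aux

lemma lemA {p t u : ℝ} (hp : 1 ≤ p) (ht : 0 < t) (htu : t ≤ u) :
    t ^ (-p) - u ^ (-p) ≤ p * (u - t) * t ^ (-(p + 1)) := by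
  have hu : 0 < u := ht.trans_le htu
  have h1 : 1 + p * (t / u - 1) ≤ (t / u) ^ p := by
    have := one_add_mul_self_le_rpow_one_add (s := t / u - 1) (by
      have : 0 < t / u := div_pos ht hu
      linarith) hp
    simpa using this
  have h2 : (t / u) ^ p = t ^ p * u ^ (-p) := by
    rw [div_rpow ht.le hu.le, rpow_neg hu.le, div_eq_mul_inv]
  have h3 : t ^ (-p) * (t ^ p * u ^ (-p)) = u ^ (-p) := by
    rw [← mul_assoc, ← rpow_add ht]
    simp
  have h4 : t ^ (-p) - u ^ (-p) ≤ t ^ (-p) * (p * (1 - t / u)) := by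
    have hmul := mul_le_mul_of_nonneg_left h1 (rpow_nonneg ht.le (-p))
    rw [h2, h3] at hmul
    nlinarith [rpow_nonneg ht.le (-p)]
  refine h4.trans ?_
  have h5 : t ^ (-p) * (p * (1 - t / u)) ≤ t ^ (-p) * (p * ((u - t) / t)) := by
    apply mul_le_mul_of_nonneg_left _ (rpow_nonneg ht.le (-p))
    apply mul_le_mul_of_nonneg_left _ (by linarith)
    have e : 1 - t / u = (u - t) / u := by field_simp
    rw [e]
    exact div_le_div_of_nonneg_left (by linarith) ht htu
  refine h5.trans_eq ?_
  have h6 : t ^ (-(p + 1)) = t ^ (-p) * t⁻¹ := by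
    rw [neg_add, rpow_add ht, Real.rpow_neg_one]
  rw [h6]; ring

lemma lemA' {p t u m : ℝ} (hp : 1 ≤ p) (hm : 0 < m) (ht : m ≤ t) (hu : m ≤ u) :
    |t ^ (-p) - u ^ (-p)| ≤ p * |t - u| * m ^ (-(p + 1)) := by
  have hmp : m ^ (-(p+1)) ≥ 0 := rpow_nonneg hm.le _
  have key : ∀ t u : ℝ, m ≤ t → m ≤ u → t ≤ u →
      |t ^ (-p) - u ^ (-p)| ≤ p * |t - u| * m ^ (-(p + 1)) := by
    intro t u ht hu htu
    have ht0 : 0 < t := hm.trans_le ht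
    have hnn : u ^ (-p) ≤ t ^ (-p) :=
      Real.rpow_le_rpow_of_nonpos ht0 htu (by linarith)
    rw [abs_of_nonneg (by linarith), abs_of_nonpos (by linarith)]
    refine (lemA hp ht0 htu).trans ?_
    have h1 : t ^ (-(p+1)) ≤ m ^ (-(p+1)) :=
      Real.rpow_le_rpow_of_nonpos hm ht (by linarith)
    have : 0 ≤ p * (u - t) := by nlinarith
    nlinarith
  rcases le_total t u with h | h
  · exact key t u ht hu h
  · have := key u t hu ht h
    rwa [abs_sub_comm, abs_sub_comm u t] at this

lemma lemB {E : Type*} [NormedAddCommGroup E] [NormedSpace ℝ E] {p m : ℝ} (hp : 1 ≤ p) (hm : 0 < m)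
    {a b : E} (ha : m ≤ ‖a‖) (hb : m ≤ ‖b‖) (hb3 : ‖b‖ ≤ 3 * m) :
    ‖‖a‖ ^ (-p) • a - ‖b‖ ^ (-p) • b‖ ≤ (3 * p + 1) * ‖a - b‖ * m ^ (-p) := by
  have key : (‖a‖ ^ (-p)) • a - (‖b‖ ^ (-p)) • b
      = (‖a‖ ^ (-p)) • (a - b) + (‖a‖ ^ (-p) - ‖b‖ ^ (-p)) • b := by
    rw [smul_sub, sub_smul]; abel
  rw [key]
  refine (norm_add_le _ _).trans ?_
  have h1 : ‖(‖a‖ ^ (-p)) • (a - b)‖ ≤ m ^ (-p) * ‖a - b‖ := by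
    rw [norm_smul, Real.norm_eq_abs, abs_of_nonneg (rpow_nonneg (norm_nonneg a) _)]
    exact mul_le_mul_of_nonneg_right (Real.rpow_le_rpow_of_nonpos hm ha (by linarith))
      (norm_nonneg _)
  have h2 : ‖(‖a‖ ^ (-p) - ‖b‖ ^ (-p)) • b‖ ≤ (p * ‖a - b‖ * m ^ (-(p+1))) * (3 * m) := by
    rw [norm_smul, Real.norm_eq_abs]
    have hA : |‖a‖ ^ (-p) - ‖b‖ ^ (-p)| ≤ p * ‖a - b‖ * m ^ (-(p+1)) := by
      refine (lemA' hp hm ha hb).trans ?_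
      have habs : |‖a‖ - ‖b‖| ≤ ‖a - b‖ := abs_norm_sub_norm_le a b
      have hp0 : (0:ℝ) ≤ p := by linarith
      have : 0 ≤ m ^ (-(p+1)) := rpow_nonneg hm.le _
      gcongr
    exact mul_le_mul hA hb3 (norm_nonneg _) (by positivity)
  have hmp : m ^ (-(p+1)) * m = m ^ (-p) := by
    nth_rewrite 2 [← Real.rpow_one m]
    rw [← Real.rpow_add hm]
    ring_nf
  have h3 : p * ‖a - b‖ * m ^ (-(p+1)) * (3 * m) = 3 * p * ‖a - b‖ * m ^ (-p) := by
    rw [← hmp]; ring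
  nlinarith [h1, h2, h3]

lemma lemC {α : Type*} [PseudoMetricSpace α] (x : α) {R : ℝ} (hR : 0 < R) :
    (Metric.closedBall x R)ᶜ
      = ⋃ k : ℕ, (Metric.closedBall x (2 ^ (k + 1) * R) \ Metric.closedBall x (2 ^ k * R)) := by
  ext y
  simp only [Set.mem_compl_iff, Metric.mem_closedBall, not_le, Set.mem_iUnion, Set.mem_diff]
  constructor
  · intro hy
    have hex : ∃ n : ℕ, dist y x ≤ 2 ^ (n + 1) * R := by
      obtain ⟨n, hn⟩ := pow_unbounded_of_one_lt (dist y x / R) (one_lt_two (α := ℝ))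
      rw [div_lt_iff₀ hR] at hn
      have h12 : (2:ℝ) ^ n ≤ 2 ^ (n + 1) := pow_le_pow_right₀ one_le_two (Nat.le_succ n)
      exact ⟨n, by nlinarith⟩
    refine ⟨Nat.find hex, Nat.find_spec hex, ?_⟩
    rcases Nat.eq_zero_or_pos (Nat.find hex) with h0 | h0
    · rw [h0]; simpa using hy
    · obtain ⟨j, hj⟩ := Nat.exists_eq_succ_of_ne_zero h0.ne'
      have := Nat.find_min hex (m := j) (by omega)
      rw [hj]
      push_neg at this
      exact this
  · rintro ⟨k, _, hk⟩
    have h1 : (1:ℝ) ≤ 2 ^ k := by simpa using pow_le_pow_right₀ (one_le_two (α := ℝ)) (Nat.zero_le k)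
    nlinarith

lemma lemD {α : Type*} [MeasurableSpace α] [PseudoMetricSpace α] [OpensMeasurableSpace α]
    (x : α) {R G s : ℝ} (hR : 0 < R) (hs1 : 1 < s) (hs2 : s < 2) (hG0 : 0 ≤ G)
    (μ : Measure α) [IsFiniteMeasure μ]
    (hG : ∀ r : ℝ, 0 < r → (μ (Metric.closedBall x r)).toReal ≤ G * r ^ s) :
    ∫⁻ y in (Metric.closedBall x R)ᶜ, ENNReal.ofReal (dist y x ^ (-(s+1))) ∂μ
      ≤ ENNReal.ofReal (8 * G / R) := by
  set S : ℕ → Set α := fun k =>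
    Metric.closedBall x (2 ^ (k + 1) * R) \ Metric.closedBall x (2 ^ k * R) with hS
  have hmeas : ∀ k, MeasurableSet (S k) := fun k =>
    measurableSet_closedBall.diff measurableSet_closedBall
  have hd : ∀ i j : ℕ, i < j → Disjoint (S i) (S j) := by
    intro i j h
    refine Set.disjoint_left.mpr fun z hz hz' => ?_
    have h1 : dist z x ≤ 2 ^ (i + 1) * R := hz.1
    have h2 : ¬ dist z x ≤ 2 ^ j * R := fun hc => hz'.2 hc
    have h3 : (2:ℝ) ^ (i + 1) ≤ 2 ^ j := pow_le_pow_right₀ (one_le_two (α := ℝ)) (by omega)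
    exact h2 (h1.trans (by nlinarith))
  have hdisj : Pairwise (Function.onFun Disjoint S) := by
    intro i j hij
    rcases hij.lt_or_gt with h | h
    · exact hd i j h
    · exact (hd j i h).symm
  have key : ∀ k : ℕ, ∫⁻ y in S k, ENNReal.ofReal (dist y x ^ (-(s+1))) ∂μ
      ≤ ENNReal.ofReal (4 * G / R) * (2⁻¹ : ENNReal) ^ k := by
    intro k
    have h2k : (0:ℝ) < 2 ^ k := by positivity
    have h2k1 : (0:ℝ) < 2 ^ (k + 1) := by positivity
    have hrk : (0:ℝ) < 2 ^ k * R := by positivity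
    -- real-number inequality
    have h2s : (2:ℝ) ^ s ≤ 4 := by
      calc (2:ℝ) ^ s ≤ (2:ℝ) ^ (2:ℝ) := rpow_le_rpow_of_exponent_le one_le_two hs2.le
        _ = 4 := by
          rw [show (2:ℝ) = ((2:ℕ):ℝ) by norm_num, Real.rpow_natCast]; norm_num
    have hC : ((2:ℝ) ^ k) ^ (-(s+1)) * ((2:ℝ) ^ (k+1)) ^ s = 2 ^ s * (1/2:ℝ) ^ k := by
      rw [← Real.rpow_natCast 2 k, ← Real.rpow_natCast 2 (k+1),
        ← Real.rpow_mul (by norm_num), ← Real.rpow_mul (by norm_num),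
        ← Real.rpow_add (by norm_num)]
      have he : (k:ℝ) * (-(s+1)) + ((k+1:ℕ):ℝ) * s = s + (-(k:ℝ)) := by push_cast; ring
      rw [he, Real.rpow_add (by norm_num), Real.rpow_neg (by norm_num), Real.rpow_natCast]
      rw [one_div, inv_pow]
    have hD : R ^ (-(s+1)) * R ^ s = R⁻¹ := by
      rw [← Real.rpow_add hR, show -(s+1) + s = -1 by ring, Real.rpow_neg_one]
    have Tk : ((2:ℝ) ^ k * R) ^ (-(s+1)) * (G * ((2:ℝ) ^ (k+1) * R) ^ s)
        ≤ 4 * G / R * (1/2:ℝ) ^ k := by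
      rw [Real.mul_rpow h2k.le hR.le, Real.mul_rpow h2k1.le hR.le]
      have heq : ((2:ℝ) ^ k) ^ (-(s+1)) * R ^ (-(s+1)) * (G * (((2:ℝ) ^ (k+1)) ^ s * R ^ s))
          = G * (((2:ℝ) ^ k) ^ (-(s+1)) * ((2:ℝ) ^ (k+1)) ^ s) * (R ^ (-(s+1)) * R ^ s) := by
        ring
      rw [heq, hC, hD, div_eq_mul_inv]
      have hhalf : (0:ℝ) ≤ (1/2:ℝ) ^ k := by positivity
      have hRinv : (0:ℝ) ≤ R⁻¹ := by positivity
      have hstep : G * (2 ^ s * (1/2:ℝ) ^ k) * R⁻¹ ≤ G * (4 * (1/2:ℝ) ^ k) * R⁻¹ :=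
        mul_le_mul_of_nonneg_right
          (mul_le_mul_of_nonneg_left (mul_le_mul_of_nonneg_right h2s hhalf) hG0) hRinv
      exact hstep.trans_eq (by ring)
    calc ∫⁻ y in S k, ENNReal.ofReal (dist y x ^ (-(s+1))) ∂μ
        ≤ ∫⁻ _ in S k, ENNReal.ofReal (((2:ℝ) ^ k * R) ^ (-(s+1))) ∂μ := by
          refine lintegral_mono_ae (((ae_restrict_mem (hmeas k)).mono fun y hy => ?_))
          refine ENNReal.ofReal_le_ofReal ?_
          have : 2 ^ k * R < dist y x := by
            have := hy.2; simpa [Metric.mem_closedBall, not_le] using this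
          exact Real.rpow_le_rpow_of_nonpos hrk this.le (by linarith)
      _ = ENNReal.ofReal (((2:ℝ) ^ k * R) ^ (-(s+1))) * μ (S k) := setLIntegral_const _ _
      _ ≤ ENNReal.ofReal (((2:ℝ) ^ k * R) ^ (-(s+1)))
            * ENNReal.ofReal (G * ((2:ℝ) ^ (k+1) * R) ^ s) := by
          refine mul_le_mul_right ?_ _
          have hle : μ (S k) ≤ μ (Metric.closedBall x (2 ^ (k+1) * R)) :=
            measure_mono Set.diff_subset
          have heq : μ (Metric.closedBall x (2 ^ (k+1) * R))
              = ENNReal.ofReal ((μ (Metric.closedBall x (2 ^ (k+1) * R))).toReal) :=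
            (ENNReal.ofReal_toReal (measure_ne_top μ _)).symm
          refine hle.trans (heq.le.trans (ENNReal.ofReal_le_ofReal ?_))
          exact hG _ (by positivity)
      _ = ENNReal.ofReal (((2:ℝ) ^ k * R) ^ (-(s+1)) * (G * ((2:ℝ) ^ (k+1) * R) ^ s)) :=
          (ENNReal.ofReal_mul (rpow_nonneg hrk.le _)).symm
      _ ≤ ENNReal.ofReal (4 * G / R * (1/2:ℝ) ^ k) := ENNReal.ofReal_le_ofReal Tk
      _ = ENNReal.ofReal (4 * G / R) * (2⁻¹ : ENNReal) ^ k := by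
          rw [ENNReal.ofReal_mul (by positivity), ENNReal.ofReal_pow (by norm_num)]
          congr 1
          rw [one_div, ENNReal.ofReal_inv_of_pos (by norm_num)]
          norm_num
  calc ∫⁻ y in (Metric.closedBall x R)ᶜ, ENNReal.ofReal (dist y x ^ (-(s+1))) ∂μ
      = ∑' k, ∫⁻ y in S k, ENNReal.ofReal (dist y x ^ (-(s+1))) ∂μ := by
        rw [lemC x hR, lintegral_iUnion hmeas hdisj]
    _ ≤ ∑' k, ENNReal.ofReal (4 * G / R) * (2⁻¹ : ENNReal) ^ k := ENNReal.tsum_le_tsum key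
    _ = ENNReal.ofReal (4 * G / R) * ∑' k, (2⁻¹ : ENNReal) ^ k := ENNReal.tsum_mul_left
    _ = ENNReal.ofReal (4 * G / R) * 2 := by
        rw [ENNReal.tsum_geometric, ENNReal.one_sub_inv_two, inv_inv]
    _ = ENNReal.ofReal (8 * G / R) := by
        rw [show (2:ENNReal) = ENNReal.ofReal 2 by norm_num,
          ← ENNReal.ofReal_mul (by positivity)]
        congr 1; ring

end Aux

set_option maxHeartbeats 2000000

/-- Oscillation bound. Let `ν = νp - νm` be a finite signed measure on `ℝ²`
supported on `sν`, let `B = D(x,ρ)` and `Ω ⊆ B` with `dist(Ω, supp ν) ≥ ε ρ`, `0 < ε < 1`.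
Then for `M ≥ 6`, `s ∈ (1,2)`, and any `G` with `|ν|(D(x,r)) ≤ G r^s` for all `r > 0`,
`osc_Ω Rν ≤ 2/(ερ)^s · |ν|((M/3)B) + (C/M) · G`, where `C = C(s)`. -/
theorem stmt10 (s : ℝ) (hs : 1 < s ∧ s < 2) :
    ∃ C > 0, ∀ (νp νm : Measure (EuclideanSpace ℝ (Fin 2))),
      IsFiniteMeasure νp → IsFiniteMeasure νm →
      ∀ (sν Ω : Set (EuclideanSpace ℝ (Fin 2))) (x : EuclideanSpace ℝ (Fin 2)) (ρ ε M G : ℝ),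
      0 < ρ → 0 < ε → ε < 1 → 6 ≤ M →
      νp sνᶜ = 0 → νm sνᶜ = 0 →
      Ω ⊆ Metric.closedBall x ρ →
      (∀ y' ∈ Ω, ∀ y ∈ sν, ε * ρ ≤ dist y' y) →
      (∀ r : ℝ, 0 < r → ((νp + νm) (Metric.closedBall x r)).toReal ≤ G * r ^ s) →
      ∀ x' ∈ Ω, ∀ x'' ∈ Ω,
        ‖((∫ y, ‖x' - y‖ ^ (-(s + 1)) • (x' - y) ∂νp)
            - ∫ y, ‖x' - y‖ ^ (-(s + 1)) • (x' - y) ∂νm)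
          - ((∫ y, ‖x'' - y‖ ^ (-(s + 1)) • (x'' - y) ∂νp)
            - ∫ y, ‖x'' - y‖ ^ (-(s + 1)) • (x'' - y) ∂νm)‖
          ≤ 2 / (ε * ρ) ^ s * ((νp + νm) (Metric.closedBall x (M / 3 * ρ))).toReal
            + C / M * G := by
  obtain ⟨hs1, hs2⟩ := hs
  refine ⟨7680, by norm_num, ?_⟩
  intro νp νm hνp hνm sν Ω x ρ ε M G hρ hε hε1 hM hp0 hm0 hΩB hdist hG x' hx' x'' hx''
  have hMpos : (0:ℝ) < M := by linarith
  have hερ : (0:ℝ) < ε * ρ := mul_pos hε hρ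
  have hR : (0:ℝ) < M / 3 * ρ := by positivity
  have hR2 : 2 * ρ ≤ M / 3 * ρ := by nlinarith
  have hG0 : (0:ℝ) ≤ G := by
    have := hG 1 one_pos
    simp only [Real.one_rpow, mul_one] at this
    exact le_trans ENNReal.toReal_nonneg this
  set A := Metric.closedBall x (M / 3 * ρ) with hA
  set K : EuclideanSpace ℝ (Fin 2) → EuclideanSpace ℝ (Fin 2) → EuclideanSpace ℝ (Fin 2) :=
    fun w y => ‖w - y‖ ^ (-(s + 1)) • (w - y) with hK
  -- measurability
  have hKmeas : ∀ w, Measurable (K w) := by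
    intro w
    have h1 : Measurable fun y : EuclideanSpace ℝ (Fin 2) => w - y :=
      measurable_const.sub measurable_id
    have h2 : Measurable fun y : EuclideanSpace ℝ (Fin 2) => ‖w - y‖ ^ (-(s + 1)) := by
      fun_prop
    exact h2.smul h1
  -- pointwise bound on the support
  have hnorm : ∀ w ∈ Ω, ∀ y ∈ sν, ‖K w y‖ ≤ (ε * ρ) ^ (-s) := by
    intro w hw y hy
    have hd : ε * ρ ≤ dist w y := hdist w hw y hy
    have hpos : 0 < ‖w - y‖ := by rw [← dist_eq_norm]; linarith
    rw [hK]
    simp only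
    rw [norm_smul, Real.norm_eq_abs, abs_of_nonneg (rpow_nonneg (norm_nonneg _) _)]
    have he : ‖w - y‖ ^ (-(s+1)) * ‖w - y‖ = ‖w - y‖ ^ (-s) := by
      nth_rewrite 2 [← Real.rpow_one ‖w - y‖]
      rw [← Real.rpow_add hpos]
      ring_nf
    rw [he]
    refine Real.rpow_le_rpow_of_nonpos hερ ?_ (by linarith)
    rw [← dist_eq_norm]; exact hd
  -- integrability
  have hint : ∀ w ∈ Ω, ∀ (ν : Measure (EuclideanSpace ℝ (Fin 2))),
      IsFiniteMeasure ν → ν sνᶜ = 0 → Integrable (K w) ν := by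
    intro w hw ν hfin h0
    have hae : ∀ᵐ y ∂ν, y ∈ sν := by
      rw [ae_iff]
      simpa [Set.compl_def] using h0
    exact Integrable.mono' (integrable_const ((ε * ρ) ^ (-s)))
      ((hKmeas w).aestronglyMeasurable) (hae.mono fun y hy => hnorm w hw y hy)
  -- splitting
  have hsplit : ∀ w ∈ Ω, ∀ (ν : Measure (EuclideanSpace ℝ (Fin 2))),
      IsFiniteMeasure ν → ν sνᶜ = 0 →
      ∫ y, K w y ∂ν = (∫ y in A, K w y ∂ν) + ∫ y in Aᶜ, K w y ∂ν := by
    intro w hw ν hfin h0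
    exact (integral_add_compl measurableSet_closedBall (hint w hw ν hfin h0)).symm
  -- near-field bound
  have hnear : ∀ w ∈ Ω, ∀ (ν : Measure (EuclideanSpace ℝ (Fin 2))),
      IsFiniteMeasure ν → ν sνᶜ = 0 →
      ‖∫ y in A, K w y ∂ν‖ ≤ (ε * ρ) ^ (-s) * (ν A).toReal := by
    intro w hw ν hfin h0
    have hae : ∀ᵐ y ∂ν, y ∈ sν := by
      rw [ae_iff]; simpa [Set.compl_def] using h0
    exact norm_setIntegral_le_of_norm_le_const_ae' (measure_lt_top ν A)
      (hae.mono fun y hy _ => hnorm w hw y hy)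
  -- kernel difference bound off A
  have hρ' : dist x' x ≤ ρ := hΩB hx'
  have hρ'' : dist x'' x ≤ ρ := hΩB hx''
  have hxx : ‖x' - x''‖ ≤ 2 * ρ := by
    rw [← dist_eq_norm]
    calc dist x' x'' ≤ dist x' x + dist x x'' := dist_triangle _ _ _
      _ ≤ ρ + ρ := by rw [dist_comm x x'']; exact add_le_add hρ' hρ''
      _ = 2 * ρ := by ring
  have hkb : ∀ y ∈ Aᶜ, ‖K x' y - K x'' y‖ ≤ 160 * ρ * (dist y x ^ (-(s+1))) := by
    intro y hy
    set d := dist y x with hd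
    have hdR : M / 3 * ρ < d := by
      simpa [hA, Metric.mem_closedBall, not_le] using hy
    have hd0 : (0:ℝ) < d := lt_trans hR hdR
    have hd2ρ : 2 * ρ ≤ d := le_trans hR2 hdR.le
    have ha : d / 2 ≤ ‖x' - y‖ := by
      rw [← dist_eq_norm, dist_comm]
      have := dist_triangle y x' x
      have h2 : dist x' x ≤ ρ := hρ'
      linarith [this]
    have hb : d / 2 ≤ ‖x'' - y‖ := by
      rw [← dist_eq_norm, dist_comm]
      have := dist_triangle y x'' x
      linarith [this]
    have hb3 : ‖x'' - y‖ ≤ 3 * (d / 2) := by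
      rw [← dist_eq_norm]
      calc dist x'' y ≤ dist x'' x + dist x y := dist_triangle _ _ _
        _ ≤ ρ + d := by rw [dist_comm x y]; exact add_le_add hρ'' le_rfl
        _ ≤ 3 * (d / 2) := by linarith
    have hlemB := lemB (p := s + 1) (m := d / 2) (by linarith) (by linarith)
      ha hb hb3 (a := x' - y) (b := x'' - y)
    have hsub : (x' - y) - (x'' - y) = x' - x'' := by abel
    rw [hsub] at hlemB
    refine le_trans hlemB ?_
    have hf : (0:ℝ) ≤ d ^ (-(s+1)) := rpow_nonneg hd0.le _
    have heq : ((d/2):ℝ) ^ (-(s+1)) = d ^ (-(s+1)) * (2:ℝ) ^ (s+1) := by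
      rw [Real.div_rpow hd0.le (by norm_num), Real.rpow_neg (by norm_num : (0:ℝ) ≤ 2),
        div_eq_mul_inv, inv_inv]
    have h8 : (2:ℝ) ^ (s+1) ≤ 8 := by
      calc (2:ℝ) ^ (s+1) ≤ (2:ℝ) ^ (3:ℝ) :=
            rpow_le_rpow_of_exponent_le one_le_two (by linarith)
        _ = 8 := by
            rw [show (3:ℝ) = ((3:ℕ):ℝ) by norm_num, Real.rpow_natCast]; norm_num
    have h1 : ((d/2):ℝ) ^ (-(s+1)) ≤ 8 * d ^ (-(s+1)) := by
      rw [heq]; nlinarith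
    calc (3 * (s + 1) + 1) * ‖x' - x''‖ * (d / 2) ^ (-(s+1))
        ≤ (10 * (2 * ρ)) * (8 * d ^ (-(s+1))) := by
          refine mul_le_mul ?_ h1 (rpow_nonneg (by positivity) _) (by positivity)
          refine mul_le_mul (by linarith) hxx (norm_nonneg _) (by norm_num)
      _ ≤ 160 * ρ * d ^ (-(s+1)) := by nlinarith
  -- far-field bound
  have hfar : ∀ (ν : Measure (EuclideanSpace ℝ (Fin 2))), IsFiniteMeasure ν →
      (∀ r : ℝ, 0 < r → (ν (Metric.closedBall x r)).toReal ≤ G * r ^ s) →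
      ‖∫ y in Aᶜ, (K x' y - K x'' y) ∂ν‖ ≤ 3840 * G / M := by
    intro ν hfin hGν
    refine le_trans (norm_integral_le_lintegral_norm _) ?_
    refine ENNReal.toReal_le_of_le_ofReal (by positivity) ?_
    calc ∫⁻ y in Aᶜ, ENNReal.ofReal ‖K x' y - K x'' y‖ ∂ν
        ≤ ∫⁻ y in Aᶜ, ENNReal.ofReal (160 * ρ * (dist y x ^ (-(s+1)))) ∂ν := by
          refine lintegral_mono_ae
            (((ae_restrict_mem measurableSet_closedBall.compl)).mono fun y hy => ?_)
          exact ENNReal.ofReal_le_ofReal (hkb y hy)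
      _ = ENNReal.ofReal (160 * ρ) * ∫⁻ y in Aᶜ, ENNReal.ofReal (dist y x ^ (-(s+1))) ∂ν := by
          simp_rw [ENNReal.ofReal_mul (by positivity : (0:ℝ) ≤ 160 * ρ)]
          rw [lintegral_const_mul' _ _ ENNReal.ofReal_ne_top]
      _ ≤ ENNReal.ofReal (160 * ρ) * ENNReal.ofReal (8 * G / (M / 3 * ρ)) :=
          mul_le_mul_right (lemD x hR hs1 hs2 hG0 ν hGν) _
      _ = ENNReal.ofReal (160 * ρ * (8 * G / (M / 3 * ρ))) :=
          (ENNReal.ofReal_mul (by positivity)).symm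
      _ = ENNReal.ofReal (3840 * G / M) := by
          congr 1
          field_simp
          ring
  -- growth for each measure separately
  have hGsep : ∀ (ν : Measure (EuclideanSpace ℝ (Fin 2))),
      (ν ≤ νp + νm) → ∀ r : ℝ, 0 < r → (ν (Metric.closedBall x r)).toReal ≤ G * r ^ s := by
    intro ν hle r hr
    refine le_trans (ENNReal.toReal_mono (measure_ne_top (νp + νm) _) (hle _)) (hG r hr)
  -- rearrangement
  have hfp : (∫ y in Aᶜ, K x' y ∂νp) - ∫ y in Aᶜ, K x'' y ∂νp
      = ∫ y in Aᶜ, (K x' y - K x'' y) ∂νp :=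
    (integral_sub ((hint x' hx' νp hνp hp0).restrict)
      ((hint x'' hx'' νp hνp hp0).restrict)).symm
  have hfm : (∫ y in Aᶜ, K x' y ∂νm) - ∫ y in Aᶜ, K x'' y ∂νm
      = ∫ y in Aᶜ, (K x' y - K x'' y) ∂νm :=
    (integral_sub ((hint x' hx' νm hνm hm0).restrict)
      ((hint x'' hx'' νm hνm hm0).restrict)).symm
  have hX : ((∫ y, K x' y ∂νp) - ∫ y, K x' y ∂νm) - ((∫ y, K x'' y ∂νp) - ∫ y, K x'' y ∂νm)
      = (((∫ y in A, K x' y ∂νp) - ∫ y in A, K x' y ∂νm)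
          - ((∫ y in A, K x'' y ∂νp) - ∫ y in A, K x'' y ∂νm))
        + ((∫ y in Aᶜ, (K x' y - K x'' y) ∂νp) - ∫ y in Aᶜ, (K x' y - K x'' y) ∂νm) := by
    rw [hsplit x' hx' νp hνp hp0, hsplit x' hx' νm hνm hm0,
      hsplit x'' hx'' νp hνp hp0, hsplit x'' hx'' νm hνm hm0, ← hfp, ← hfm]
    abel
  show ‖((∫ y, K x' y ∂νp) - ∫ y, K x' y ∂νm)
      - ((∫ y, K x'' y ∂νp) - ∫ y, K x'' y ∂νm)‖
    ≤ 2 / (ε * ρ) ^ s * ((νp + νm) A).toReal + 7680 / M * G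
  rw [hX]
  have htri : ‖(((∫ y in A, K x' y ∂νp) - ∫ y in A, K x' y ∂νm)
          - ((∫ y in A, K x'' y ∂νp) - ∫ y in A, K x'' y ∂νm))
        + ((∫ y in Aᶜ, (K x' y - K x'' y) ∂νp) - ∫ y in Aᶜ, (K x' y - K x'' y) ∂νm)‖
      ≤ (‖∫ y in A, K x' y ∂νp‖ + ‖∫ y in A, K x' y ∂νm‖
          + ‖∫ y in A, K x'' y ∂νp‖ + ‖∫ y in A, K x'' y ∂νm‖)
        + (‖∫ y in Aᶜ, (K x' y - K x'' y) ∂νp‖ + ‖∫ y in Aᶜ, (K x' y - K x'' y) ∂νm‖) := by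
    refine le_trans (norm_add_le _ _) (add_le_add ?_ (norm_sub_le _ _))
    refine le_trans (norm_sub_le _ _) ?_
    have h1 := norm_sub_le (∫ y in A, K x' y ∂νp) (∫ y in A, K x' y ∂νm)
    have h2 := norm_sub_le (∫ y in A, K x'' y ∂νp) (∫ y in A, K x'' y ∂νm)
    linarith
  refine le_trans htri ?_
  have hn1 := hnear x' hx' νp hνp hp0
  have hn2 := hnear x' hx' νm hνm hm0
  have hn3 := hnear x'' hx'' νp hνp hp0
  have hn4 := hnear x'' hx'' νm hνm hm0
  have hf1 := hfar νp hνp (hGsep νp (Measure.le_add_right le_rfl))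
  have hf2 := hfar νm hνm (hGsep νm (Measure.le_add_left le_rfl))
  have hAtr : ((νp + νm) A).toReal = (νp A).toReal + (νm A).toReal := by
    rw [Measure.add_apply, ENNReal.toReal_add (measure_ne_top νp A) (measure_ne_top νm A)]
  have h2div : 2 / (ε * ρ) ^ s = 2 * (ε * ρ) ^ (-s) := by
    rw [Real.rpow_neg hερ.le, div_eq_mul_inv]
  have h768 : 3840 * G / M + 3840 * G / M = 7680 / M * G := by ring
  rw [hAtr, h2div]
  have hnn : (0:ℝ) ≤ (ε * ρ) ^ (-s) := rpow_nonneg hερ.le _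
  nlinarith [ENNReal.toReal_nonneg (a := νp A), ENNReal.toReal_nonneg (a := νm A)]
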